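/- A circle p = a(X·X) + b·X + c (with a ≠ 0) is orthogonal under the cycle pairing to a linear cycle q = e·X + f if and only if q vanishes at the center −b/(2a) of p, i.e., ⟨p, q⟩ = −2a·q(−b/2a). -/

import Mathlib

/-- A circle `p = a(X·X)+b·X+c` (with `a ≠ 0`) is cycle-orthogonal to a linear cycle
`q = e·X+f` iff `q` vanishes at the center `-b/(2a)` of `p`; indeed
`⟨p,q⟩ = -2a·q(-b/2a)`. -/
theorem stmt_2 {k : Type*} [Field k] (hchar : (2 : k) ≠ 0)
    {E : Type*} [AddCommGroup E] [Module k E]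
    (B : LinearMap.BilinForm k E) (hB : B.IsSymm)
    (haniso : ∀ x : E, B x x = 0 → x = 0)
    (cyc : (k × E × k) → (k × E × k) → k)
    (hcyc : ∀ p q : k × E × k,
      cyc p q = B p.2.1 q.2.1 - 2 * p.1 * q.2.2 - 2 * q.1 * p.2.2)
    (a c f : k) (b e : E) (ha : a ≠ 0) :
    cyc (a, b, c) (0, e, f) = -(2 * a) * (B e (-((2 * a)⁻¹ • b)) + f) ∧
    (cyc (a, b, c) (0, e, f) = 0 ↔ B e (-((2 * a)⁻¹ • b)) + f = 0) := by
  have h2a : (2 * a) ≠ 0 := mul_ne_zero hchar ha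
  have key : cyc (a, b, c) (0, e, f) = -(2 * a) * (B e (-((2 * a)⁻¹ • b)) + f) := by
    rw [hcyc]
    simp only [map_neg, map_smul, LinearMap.neg_apply, LinearMap.smul_apply, smul_eq_mul]
    have hsym : B b e = B e b := hB.eq b e
    field_simp
    ring_nf
    rw [hsym]
    ring
  refine ⟨key, ?_⟩
  rw [key]
  constructor
  · intro h
    exact (mul_eq_zero.mp h).resolve_left (neg_ne_zero.mpr h2a)
  · intro h; rw [h, mul_zero]
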